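/- Let 𝓕 be a finite family of distinct sets with levels 𝓕₁, …, 𝓕_t and auxiliary graph H, and let α be the size of the largest union-free subfamily of 𝓕. If a₁ < a₂ < ⋯ < a_k are the vertices of an independent set in H, then Σ_{j=1}^{k} |𝓕_{a_j}| ≤ α. -/

import Mathlib

open scoped Classical in
/-- The maximal (by inclusion) sets of a family. -/
noncomputable def maxSets (G : Finset (Finset ℕ)) : Finset (Finset ℕ) :=
  G.filter fun X => ∀ Y ∈ G, ¬ X ⊂ Y

/-- `rem F k` is what remains of the family `F` after `k` rounds of peeling off
the maximal sets. -/
noncomputable def rem (F : Finset (Finset ℕ)) : ℕ → Finset (Finset ℕ)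
  | 0 => F
  | k + 1 => rem F k \ maxSets (rem F k)

open scoped Classical in
/-- The length `t` of the longest chain (under inclusion) in the family `F`. -/
noncomputable def famHeight (F : Finset (Finset ℕ)) : ℕ :=
  (Finset.filter (fun C : Finset (Finset ℕ) => IsChain (· ⊆ ·) (C : Set (Finset ℕ))) F.powerset).sup Finset.card

/-- The `i`-th level `𝓕ᵢ` of the family `F`: with `t = famHeight F`,
`𝓕_t` is the family of maximal sets of `F` and, downwards, `𝓕ᵢ` is the family of
maximal sets of `F \ (𝓕_{i+1} ∪ ⋯ ∪ 𝓕_t)`.  A set has *rank* `i` if it lies in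
`level F i`. -/
noncomputable def level (F : Finset (Finset ℕ)) (i : ℕ) : Finset (Finset ℕ) :=
  maxSets (rem F (famHeight F - i))

/-- The auxiliary graph `H = H(F)` on the vertex set `{1, …, t}`, `t = famHeight F`:
the pair `(i, i')` with `i < i'` is an edge if there exist two disjoint chains
`X` and `Y`, each consisting of exactly one set of each rank `j` for `i ≤ j ≤ i' - 1`,
such that at most one set in `{X j ∪ Y k}` has rank `i'` and every other set of this
form has rank greater than `i'` or does not belong to `F`. -/
def HEdge (F : Finset (Finset ℕ)) (i i' : ℕ) : Prop :=
  1 ≤ i ∧ i < i' ∧ i' ≤ famHeight F ∧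
  ∃ X Y : ℕ → Finset ℕ,
    (∀ j, i ≤ j → j < i' → X j ∈ level F j) ∧
    (∀ j, i ≤ j → j < i' → Y j ∈ level F j) ∧
    (∀ j k, i ≤ j → j < k → k < i' → X j ⊂ X k) ∧
    (∀ j k, i ≤ j → j < k → k < i' → Y j ⊂ Y k) ∧
    (∀ j k, i ≤ j → j < i' → i ≤ k → k < i' → X j ≠ Y k) ∧
    (∀ j k, i ≤ j → j < i' → i ≤ k → k < i' →
      X j ∪ Y k ∉ F ∨ X j ∪ Y k ∈ level F i' ∨
        ∃ r, i' < r ∧ r ≤ famHeight F ∧ X j ∪ Y k ∈ level F r) ∧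
    (∀ j₁ k₁ j₂ k₂, i ≤ j₁ → j₁ < i' → i ≤ k₁ → k₁ < i' →
      i ≤ j₂ → j₂ < i' → i ≤ k₂ → k₂ < i' →
      X j₁ ∪ Y k₁ ∈ level F i' → X j₂ ∪ Y k₂ ∈ level F i' →
      X j₁ ∪ Y k₁ = X j₂ ∪ Y k₂)

/-- A family of sets is *union-free* if there are no three distinct sets
`X, Y, Z` in the family with `X ∪ Y = Z`. -/
def UnionFree (F : Finset (Finset ℕ)) : Prop :=
  ∀ X ∈ F, ∀ Y ∈ F, ∀ Z ∈ F, X ≠ Y → X ≠ Z → Y ≠ Z → X ∪ Y ≠ Z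

open scoped Classical

lemma mem_maxSets {G : Finset (Finset ℕ)} {A : Finset ℕ} :
    A ∈ maxSets G ↔ A ∈ G ∧ ∀ B ∈ G, ¬ A ⊂ B := by
  classical
  simp [maxSets]

lemma maxSets_subset (G : Finset (Finset ℕ)) : maxSets G ⊆ G := by
  intro A hA; exact (mem_maxSets.1 hA).1

lemma rem_succ_subset (F : Finset (Finset ℕ)) (k : ℕ) : rem F (k+1) ⊆ rem F k := by
  intro A hA; exact (Finset.mem_sdiff.1 hA).1

lemma rem_mono (F : Finset (Finset ℕ)) {k m : ℕ} (h : k ≤ m) : rem F m ⊆ rem F k := by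
  induction m with
  | zero => simp_all
  | succ n ih =>
    rcases Nat.eq_or_lt_of_le h with h'|h'
    · subst h'; exact fun _ h => h
    · exact fun A hA => ih (Nat.lt_succ_iff.1 h') (rem_succ_subset F n hA)

lemma rem_subset (F : Finset (Finset ℕ)) (k : ℕ) : rem F k ⊆ F :=
  rem_mono F (Nat.zero_le k)

lemma level_subset (F : Finset (Finset ℕ)) (i : ℕ) : level F i ⊆ F :=
  fun A hA => rem_subset F _ (maxSets_subset _ hA)

lemma exists_maxSets_above {G : Finset (Finset ℕ)} {A : Finset ℕ} (hA : A ∈ G) :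
    ∃ B ∈ maxSets G, A ⊆ B := by
  classical
  obtain ⟨B, hB, hmax⟩ : ∃ B ∈ G.filter (fun B => A ⊆ B),
      ∀ x ∈ G.filter (fun B => A ⊆ B), ¬ B < x := by
    obtain ⟨m, hm, hm2⟩ := (G.filter fun B => A ⊆ B).exists_maximal
      ⟨A, Finset.mem_filter.2 ⟨hA, subset_rfl⟩⟩
    exact ⟨m, hm, fun x hx hlt => hlt.2 (hm2 hx hlt.1)⟩
  refine ⟨B, mem_maxSets.2 ⟨(Finset.mem_filter.1 hB).1, ?_⟩, (Finset.mem_filter.1 hB).2⟩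
  intro C hC hBC
  exact hmax C (Finset.mem_filter.2 ⟨hC, (Finset.mem_filter.1 hB).2.trans hBC.subset⟩) hBC

lemma chain_above (F : Finset (Finset ℕ)) {A : Finset ℕ} :
    ∀ k, A ∈ rem F k → ∃ C : Finset (Finset ℕ), C ⊆ F ∧
      IsChain (· ⊆ ·) (C : Set (Finset ℕ)) ∧ A ∈ C ∧ C.card = k + 1 ∧ ∀ B ∈ C, A ⊆ B := by
  intro k
  induction k generalizing A with
  | zero =>
    intro hA
    exact ⟨{A}, by simpa using rem_subset F 0 hA, by simp, by simp, by simp, by simp⟩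
  | succ n ih =>
    intro hA
    have hA' : A ∈ rem F n ∧ A ∉ maxSets (rem F n) := Finset.mem_sdiff.1 hA
    have : ∃ B ∈ rem F n, A ⊂ B := by
      by_contra h
      push_neg at h
      exact hA'.2 (mem_maxSets.2 ⟨hA'.1, h⟩)
    obtain ⟨B, hB, hAB⟩ := this
    obtain ⟨C, hCF, hchain, hBC, hcard, habove⟩ := ih hB
    refine ⟨insert A C, ?_, ?_, Finset.mem_insert_self _ _, ?_, ?_⟩
    · intro x hx
      rcases Finset.mem_insert.1 hx with rfl | hx
      · exact rem_subset F _ hA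
      · exact hCF hx
    · rw [Finset.coe_insert]
      refine hchain.insert ?_
      intro b hb _
      exact Or.inl ((hAB.subset).trans (habove b hb))
    · rw [Finset.card_insert_of_notMem, hcard]
      intro hAC
      exact absurd ((hAB.subset).trans (habove A hAC)) (by
        intro h
        exact hAB.ne (le_antisymm hAB.subset (habove A hAC) ▸ rfl))
    · intro b hb
      rcases Finset.mem_insert.1 hb with rfl | hb
      · exact subset_rfl
      · exact (hAB.subset).trans (habove b hb)

lemma mem_rem_lt (F : Finset (Finset ℕ)) {A : Finset ℕ} {k : ℕ} (hA : A ∈ rem F k) :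
    k < famHeight F := by
  obtain ⟨C, hCF, hchain, -, hcard, -⟩ := chain_above F k hA
  have : C.card ≤ famHeight F := by
    apply Finset.le_sup
    exact Finset.mem_filter.2 ⟨Finset.mem_powerset.2 hCF, hchain⟩
  omega

lemma mem_level_iff {F : Finset (Finset ℕ)} {A : Finset ℕ} {j : ℕ} :
    A ∈ level F j ↔ A ∈ maxSets (rem F (famHeight F - j)) := Iff.rfl

lemma exists_level {F : Finset (Finset ℕ)} {A : Finset ℕ} (hA : A ∈ F) :
    ∃ j, 1 ≤ j ∧ j ≤ famHeight F ∧ A ∈ level F j := by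
  classical
  set t := famHeight F with ht
  have h0 : A ∈ rem F 0 := hA
  have ht1 : 0 < t := mem_rem_lt F h0
  set S := (Finset.range t).filter (fun k => A ∈ rem F k) with hS
  have hSne : S.Nonempty := ⟨0, Finset.mem_filter.2 ⟨Finset.mem_range.2 ht1, h0⟩⟩
  set K := S.max' hSne with hK
  have hKmem : K ∈ S := S.max'_mem hSne
  have hKrem : A ∈ rem F K := (Finset.mem_filter.1 hKmem).2
  have hKlt : K < t := Finset.mem_range.1 (Finset.mem_filter.1 hKmem).1
  have hnot : A ∉ rem F (K + 1) := by
    intro h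
    have : K + 1 ∈ S := Finset.mem_filter.2 ⟨Finset.mem_range.2 (mem_rem_lt F h), h⟩
    have := S.le_max' _ this
    omega
  have hmax : A ∈ maxSets (rem F K) := by
    by_contra h
    exact hnot (Finset.mem_sdiff.2 ⟨hKrem, h⟩)
  refine ⟨t - K, by omega, by omega, ?_⟩
  rw [mem_level_iff]
  have : t - (t - K) = K := by omega
  rw [this]
  exact hmax

lemma not_mem_rem_of_level {F : Finset (Finset ℕ)} {A : Finset ℕ} {j : ℕ}
    (hA : A ∈ level F j) {m : ℕ} (hm : famHeight F - j < m) : A ∉ rem F m := by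
  intro h
  have h1 : A ∉ maxSets (rem F (famHeight F - j)) := by
    have : A ∈ rem F (famHeight F - j + 1) := rem_mono F (by omega) h
    exact fun hc => (Finset.mem_sdiff.1 this).2 hc
  exact h1 hA

lemma level_unique {F : Finset (Finset ℕ)} {A : Finset ℕ} {j j' : ℕ}
    (hj : j ≤ famHeight F) (hj' : j' ≤ famHeight F) (h1 : 1 ≤ j) (h1' : 1 ≤ j')
    (hA : A ∈ level F j) (hA' : A ∈ level F j') : j = j' := by
  by_contra hne
  have h : famHeight F - j ≠ famHeight F - j' := by omega
  rcases Nat.lt_or_ge (famHeight F - j) (famHeight F - j') with hlt | hge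
  · exact not_mem_rem_of_level hA hlt (maxSets_subset _ hA')
  · exact not_mem_rem_of_level hA' (by omega) (maxSets_subset _ hA)

lemma ssubset_mem_rem {F : Finset (Finset ℕ)} {A B : Finset ℕ} (hA : A ∈ F)
    (hAB : A ⊂ B) : ∀ k, B ∈ rem F k → A ∈ rem F (k + 1) := by
  intro k
  induction k with
  | zero =>
    intro hB
    exact Finset.mem_sdiff.2 ⟨hA, fun h => (mem_maxSets.1 h).2 B hB hAB⟩
  | succ n ih =>
    intro hB
    have hArem : A ∈ rem F (n + 1) := ih (rem_succ_subset F n hB)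
    exact Finset.mem_sdiff.2 ⟨hArem, fun h => (mem_maxSets.1 h).2 B hB hAB⟩

lemma rank_lt_of_ssubset {F : Finset (Finset ℕ)} {A B : Finset ℕ} {i i' : ℕ}
    (hA : A ∈ level F i) (hB : B ∈ level F i') (hAB : A ⊂ B)
    (hi : 1 ≤ i) (hit : i ≤ famHeight F) (hi' : 1 ≤ i') (hit' : i' ≤ famHeight F) :
    i < i' := by
  have hBrem : B ∈ rem F (famHeight F - i') := maxSets_subset _ hB
  have hArem : A ∈ rem F (famHeight F - i' + 1) :=
    ssubset_mem_rem (level_subset F i hA) hAB _ hBrem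
  by_contra h
  exact not_mem_rem_of_level hA (by omega) hArem

lemma exists_level_succ {F : Finset (Finset ℕ)} {A : Finset ℕ} {j : ℕ}
    (hA : A ∈ level F j) (h1 : 1 ≤ j) (hjt : j < famHeight F) :
    ∃ B ∈ level F (j + 1), A ⊂ B := by
  have heq : famHeight F - j = (famHeight F - (j + 1)) + 1 := by omega
  have hArem : A ∈ rem F ((famHeight F - (j+1)) + 1) := by
    have := maxSets_subset _ hA
    rwa [heq] at this
  have h2 := Finset.mem_sdiff.1 hArem
  have : ∃ B ∈ rem F (famHeight F - (j+1)), A ⊂ B := by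
    by_contra h
    push_neg at h
    exact h2.2 (mem_maxSets.2 ⟨h2.1, h⟩)
  obtain ⟨B, hB, hAB⟩ := this
  obtain ⟨C, hC, hBC⟩ := exists_maxSets_above hB
  exact ⟨C, hC, hAB.trans_subset hBC⟩

open scoped Classical in
noncomputable def nextSet (F : Finset (Finset ℕ)) (j : ℕ) (A : Finset ℕ) : Finset ℕ :=
  if h : ∃ B ∈ level F (j + 1), A ⊂ B then h.choose else A

open scoped Classical in
noncomputable def extChain (F : Finset (Finset ℕ)) (A : Finset ℕ) (b : ℕ) : ℕ → Finset ℕ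
  | 0 => A
  | n + 1 => nextSet F (b + n) (extChain F A b n)

lemma extChain_level {F : Finset (Finset ℕ)} {A : Finset ℕ} {b : ℕ}
    (hA : A ∈ level F b) (h1 : 1 ≤ b) :
    ∀ n, b + n ≤ famHeight F →
      extChain F A b n ∈ level F (b + n) ∧ A ⊆ extChain F A b n := by
  intro n
  induction n with
  | zero => intro _; exact ⟨by simpa [extChain] using hA, subset_rfl⟩
  | succ m ih =>
    intro hle
    have hm : b + m ≤ famHeight F := by omega
    obtain ⟨hlev, hsub⟩ := ih hm
    have hex : ∃ B ∈ level F (b + m + 1), extChain F A b m ⊂ B :=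
      exists_level_succ hlev (by omega) (by omega)
    have : extChain F A b (m+1) = hex.choose := by
      show nextSet F (b + m) (extChain F A b m) = _
      rw [nextSet, dif_pos hex]
    rw [this]
    obtain ⟨hc1, hc2⟩ := hex.choose_spec
    exact ⟨by rw [Nat.add_succ]; exact hc1, hsub.trans hc2.subset⟩

lemma extChain_succ_ssubset {F : Finset (Finset ℕ)} {A : Finset ℕ} {b : ℕ}
    (hA : A ∈ level F b) (h1 : 1 ≤ b) {n : ℕ} (hle : b + n + 1 ≤ famHeight F) :
    extChain F A b n ⊂ extChain F A b (n + 1) := by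
  obtain ⟨hlev, -⟩ := extChain_level hA h1 n (by omega)
  have hex : ∃ B ∈ level F (b + n + 1), extChain F A b n ⊂ B :=
    exists_level_succ hlev (by omega) (by omega)
  have : extChain F A b (n+1) = hex.choose := by
    show nextSet F (b + n) (extChain F A b n) = _
    rw [nextSet, dif_pos hex]
  rw [this]
  exact hex.choose_spec.2

lemma extChain_ssubset {F : Finset (Finset ℕ)} {A : Finset ℕ} {b : ℕ}
    (hA : A ∈ level F b) (h1 : 1 ≤ b) {n m : ℕ} (hnm : n < m)
    (hle : b + m ≤ famHeight F) :
    extChain F A b n ⊂ extChain F A b m := by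
  induction m with
  | zero => omega
  | succ p ih =>
    rcases Nat.lt_or_ge n p with h | h
    · exact (ih h (by omega)).trans (extChain_succ_ssubset hA h1 (by omega))
    · have : n = p := by omega
      subst this
      exact extChain_succ_ssubset hA h1 (by omega)

lemma edge_of_union {F : Finset (Finset ℕ)} {X Y Z : Finset ℕ} {a b c : ℕ}
    (hX : X ∈ level F a) (hY : Y ∈ level F b) (hZ : Z ∈ level F c)
    (h1a : 1 ≤ a) (hab : a ≤ b) (h1b : 1 ≤ b) (hbc : b < c) (hct : c ≤ famHeight F)
    (hXZ : X ≠ Z) (hYZ : Y ≠ Z) (hU : X ∪ Y = Z) : HEdge F b c := by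
  have hZF : Z ∈ F := level_subset F c hZ
  have key : ∀ W : Finset ℕ, ∀ j, Z ⊆ W → W ∈ level F j → 1 ≤ j → j ≤ famHeight F →
      c ≤ j ∧ (j = c → W = Z) := by
    intro W j hZW hW h1j hjt
    rcases eq_or_ne W Z with rfl | hne
    · have : j = c := level_unique hjt hct h1j (by omega) hW hZ
      exact ⟨this.ge, fun _ => rfl⟩
    · have hss : Z ⊂ W := hZW.ssubset_of_ne (Ne.symm hne)
      have : c < j := rank_lt_of_ssubset hZ hW hss (by omega) hct h1j hjt
      exact ⟨by omega, by omega⟩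
  have hXlev : ∀ j, b ≤ j → j < c →
      extChain F X a (j - a) ∈ level F j ∧ X ⊆ extChain F X a (j - a) := by
    intro j hbj hjc
    have h := extChain_level hX h1a (j - a) (by omega)
    have e : a + (j - a) = j := by omega
    rwa [e] at h
  have hYlev : ∀ j, b ≤ j → j < c →
      extChain F Y b (j - b) ∈ level F j ∧ Y ⊆ extChain F Y b (j - b) := by
    intro j hbj hjc
    have h := extChain_level hY h1b (j - b) (by omega)
    have e : b + (j - b) = j := by omega
    rwa [e] at h
  -- unions contain Z
  have hZsub : ∀ j k, b ≤ j → j < c → b ≤ k → k < c →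
      Z ⊆ extChain F X a (j - a) ∪ extChain F Y b (k - b) := by
    intro j k hbj hjc hbk hkc
    rw [← hU]
    exact Finset.union_subset_union (hXlev j hbj hjc).2 (hYlev k hbk hkc).2
  refine ⟨h1b, hbc, hct, fun j => extChain F X a (j - a), fun j => extChain F Y b (j - b),
    fun j hbj hjc => (hXlev j hbj hjc).1, fun j hbj hjc => (hYlev j hbj hjc).1,
    ?_, ?_, ?_, ?_, ?_⟩
  · intro j k hbj hjk hkc
    have h := extChain_ssubset hX h1a (n := j - a) (m := k - a) (by omega) (by omega)
    have e : a + (k - a) = k := by omega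
    exact h
  · intro j k hbj hjk hkc
    exact extChain_ssubset hY h1b (n := j - b) (m := k - b) (by omega) (by omega)
  · -- disjointness of the chains
    intro j k hbj hjc hbk hkc heq
    have hW : extChain F Y b (k - b) ∈ level F k := (hYlev k hbk hkc).1
    have hZW : Z ⊆ extChain F Y b (k - b) := by
      rw [← hU]
      have heq' : extChain F X a (j - a) = extChain F Y b (k - b) := heq
      exact Finset.union_subset (heq' ▸ (hXlev j hbj hjc).2) (hYlev k hbk hkc).2
    have := key _ k hZW hW (by omega) (by omega)
    omega
  · -- union membership condition
    intro j k hbj hjc hbk hkc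
    by_cases hF : extChain F X a (j - a) ∪ extChain F Y b (k - b) ∈ F
    · right
      obtain ⟨r, h1r, hrt, hr⟩ := exists_level hF
      have hk := key _ r (hZsub j k hbj hjc hbk hkc) hr h1r hrt
      rcases eq_or_ne r c with rfl | hne
      · left
        exact hr
      · right
        exact ⟨r, by omega, hrt, hr⟩
    · left; exact hF
  · -- uniqueness
    intro j₁ k₁ j₂ k₂ h1 h2 h3 h4 h5 h6 h7 h8 hm1 hm2
    have e1 := (key _ c (hZsub j₁ k₁ h1 h2 h3 h4) hm1 (by omega) hct).2 rfl
    have e2 := (key _ c (hZsub j₂ k₂ h5 h6 h7 h8) hm2 (by omega) hct).2 rfl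
    rw [e1, e2]

/-- First part of Lemma 2: if `α` is the size of the largest union-free subfamily
of `F` and `I` is an independent set in the auxiliary graph `H`, then the sum of
the sizes of the levels indexed by `I` is at most `α`. -/
theorem sum_levels_indep_le (F : Finset (Finset ℕ)) (α : ℕ)
    (hα : IsGreatest {k | ∃ G ⊆ F, UnionFree G ∧ G.card = k} α)
    (I : Finset ℕ) (hI : I ⊆ Finset.Icc 1 (famHeight F))
    (hind : ∀ x ∈ I, ∀ y ∈ I, ¬ HEdge F x y) :
    ∑ j ∈ I, (level F j).card ≤ α := by
  classical
  have hbounds : ∀ j ∈ I, 1 ≤ j ∧ j ≤ famHeight F := by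
    intro j hj
    exact Finset.mem_Icc.1 (hI hj)
  have hdisj : ∀ x ∈ I, ∀ y ∈ I, x ≠ y → Disjoint (level F x) (level F y) := by
    intro x hx y hy hxy
    rw [Finset.disjoint_left]
    intro A hAx hAy
    exact hxy (level_unique (hbounds x hx).2 (hbounds y hy).2 (hbounds x hx).1
      (hbounds y hy).1 hAx hAy)
  set G := I.biUnion (level F) with hG
  have hcard : G.card = ∑ j ∈ I, (level F j).card := Finset.card_biUnion hdisj
  have hGF : G ⊆ F := by
    intro A hA
    obtain ⟨j, -, hj⟩ := Finset.mem_biUnion.1 hA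
    exact level_subset F j hj
  have hUF : UnionFree G := by
    intro X hX Y hY Z hZ hXY hXZ hYZ hU
    obtain ⟨a, haI, hXl⟩ := Finset.mem_biUnion.1 hX
    obtain ⟨b, hbI, hYl⟩ := Finset.mem_biUnion.1 hY
    obtain ⟨c, hcI, hZl⟩ := Finset.mem_biUnion.1 hZ
    obtain ⟨h1a, hat⟩ := hbounds a haI
    obtain ⟨h1b, hbt⟩ := hbounds b hbI
    obtain ⟨h1c, hct⟩ := hbounds c hcI
    have hXZ' : X ⊂ Z := (hU ▸ Finset.subset_union_left).ssubset_of_ne hXZ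
    have hYZ' : Y ⊂ Z := (hU ▸ Finset.subset_union_right).ssubset_of_ne hYZ
    have hac : a < c := rank_lt_of_ssubset hXl hZl hXZ' h1a hat h1c hct
    have hbc : b < c := rank_lt_of_ssubset hYl hZl hYZ' h1b hbt h1c hct
    rcases le_total a b with hab | hba
    · exact hind b hbI c hcI
        (edge_of_union hXl hYl hZl h1a hab h1b hbc hct hXZ hYZ hU)
    · exact hind a haI c hcI
        (edge_of_union hYl hXl hZl h1b hba h1a hac hct hYZ hXZ
          (by rw [Finset.union_comm]; exact hU))
  calc ∑ j ∈ I, (level F j).card = G.card := hcard.symm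
    _ ≤ α := hα.2 ⟨G, hGF, hUF, rfl⟩
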